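/- arXiv:2005.09299 — 2 statements merged into one kernel-verified Lean document; each statement's English description precedes it below -/
import Mathlib

section
/- Let q ∈ MvPolynomial (Fin n) (ZMod 2) be a quadratic form. Let e ∈ ℕ, let s be a finite set of natural numbers, and let f : ℕ → ℕ. Then q^e · (∏_{i ∈ s} (D_i q)^(f i)) · (q²·(D₁ q) + (D₀ q)³ + q³·(D₀ q)) = 0 if and only if there exist linear forms a and b with q = a·b. (This computes the kernel of the operation α·h₂, where h₂ = ι₂²·Q₁(ι₂) + Q₀(ι₂)³ + ι₂³·Q₀(ι₂) and α is any monomial in ι₂ and the Q_i(ι₂): the kernel is exactly the subfunctor of S² generated by the quadratic form uv, whose associated quotient is the unstable algebra H₂.) -/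
open MvPolynomial

/-- The Milnor operation `Q_i` acting on `F₂[x₁,…,xₙ]` as the `F₂`-linear derivation
with `D_i (x_j) = x_j ^ (2^(i+1))`. -/
noncomputable def milnorQ (n i : ℕ) :
    Derivation (ZMod 2) (MvPolynomial (Fin n) (ZMod 2)) (MvPolynomial (Fin n) (ZMod 2)) :=
  MvPolynomial.mkDerivation (ZMod 2) fun j => X j ^ 2 ^ (i + 1)

open Finsupp

variable {n : ℕ}

lemma degree_fin (d : Fin n →₀ ℕ) : d.degree = ∑ j : Fin n, d j := by
  rw [Finsupp.degree]
  exact Finset.sum_subset (Finset.subset_univ _) (by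
    intro x _ hx
    simpa using Finsupp.notMem_support_iff.mp hx)

lemma degree_single' (j : Fin n) (k : ℕ) : (Finsupp.single j k).degree = k := by
  rw [degree_fin]
  simp [Finsupp.single_apply]

lemma degree_add' (a b : Fin n →₀ ℕ) : (a + b).degree = a.degree + b.degree := by
  simp [degree_fin, Finset.sum_add_distrib]

lemma coeff_pderiv (j : Fin n) (p : MvPolynomial (Fin n) (ZMod 2)) (m : Fin n →₀ ℕ) :
    coeff m (pderiv j p) = coeff (m + Finsupp.single j 1) p * ((m j : ZMod 2) + 1) := by
  induction p using MvPolynomial.induction_on' with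
  | monomial d a =>
    rw [pderiv_monomial, coeff_monomial, coeff_monomial]
    by_cases hd : d = m + Finsupp.single j 1
    · subst hd
      rw [if_pos, if_pos rfl]
      · push_cast [Finsupp.add_apply, Finsupp.single_apply]
        simp
      · ext k
        simp [Finsupp.tsub_apply, Finsupp.add_apply, Finsupp.single_apply]
    · rw [if_neg hd]
      rw [zero_mul]
      by_cases hsub : d - Finsupp.single j 1 = m
      · rw [if_pos hsub]
        by_cases hj : d j = 0
        · simp [hj]
        · exfalso
          apply hd
          have h1 : Finsupp.single j 1 ≤ d := by
            rw [Finsupp.single_le_iff]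
            omega
          rw [← hsub, tsub_add_cancel_of_le h1]
      · rw [if_neg hsub]
  | add p q hp hq =>
    simp only [map_add, coeff_add, hp, hq]
    ring

lemma isHom_def (q : MvPolynomial (Fin n) (ZMod 2)) (k : ℕ) :
    q.IsHomogeneous k ↔ ∀ d : Fin n →₀ ℕ, coeff d q ≠ 0 → d.degree = k := by
  unfold MvPolynomial.IsHomogeneous MvPolynomial.IsWeightedHomogeneous
  simp [degree_eq_weight_one]
  exact Iff.rfl

lemma exists_single_of_degree_one {d : Fin n →₀ ℕ} (hd : d.degree = 1) :
    ∃ j, d = Finsupp.single j 1 := by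
  have hne : d ≠ 0 := by
    intro h; rw [h] at hd; simp [map_zero] at hd
  obtain ⟨j, hj⟩ := Finsupp.ne_iff.mp hne
  simp only [Finsupp.coe_zero, Pi.zero_apply] at hj
  have hle : Finsupp.single j 1 ≤ d := by rw [Finsupp.single_le_iff]; omega
  refine ⟨j, ?_⟩
  have h2 : d - Finsupp.single j 1 + Finsupp.single j 1 = d := tsub_add_cancel_of_le hle
  have h3 : (d - Finsupp.single j 1).degree = 0 := by
    have := degree_add' (d - Finsupp.single j 1) (Finsupp.single j 1)
    rw [h2, hd, degree_single'] at this
    omega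
  rw [Finsupp.degree_eq_zero_iff] at h3
  rw [← h2, h3, zero_add]

lemma exists_two_single_of_degree_two {d : Fin n →₀ ℕ} (hd : d.degree = 2) :
    ∃ j k, d = Finsupp.single j 1 + Finsupp.single k 1 := by
  have hne : d ≠ 0 := by
    intro h; rw [h] at hd; simp [map_zero] at hd
  obtain ⟨j, hj⟩ := Finsupp.ne_iff.mp hne
  simp only [Finsupp.coe_zero, Pi.zero_apply] at hj
  have hle : Finsupp.single j 1 ≤ d := by rw [Finsupp.single_le_iff]; omega
  have h2 : d - Finsupp.single j 1 + Finsupp.single j 1 = d := tsub_add_cancel_of_le hle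
  have h3 : (d - Finsupp.single j 1).degree = 1 := by
    have := degree_add' (d - Finsupp.single j 1) (Finsupp.single j 1)
    rw [h2, hd, degree_single'] at this
    omega
  obtain ⟨k, hk⟩ := exists_single_of_degree_one h3
  exact ⟨k, j, by rw [← h2, hk]⟩

lemma homog_pderiv {q : MvPolynomial (Fin n) (ZMod 2)} {k : ℕ} (hq : q.IsHomogeneous (k + 1))
    (j : Fin n) : (pderiv j q).IsHomogeneous k := by
  rw [isHom_def] at hq ⊢
  intro d hd
  rw [coeff_pderiv] at hd
  have h1 : coeff (d + Finsupp.single j 1) q ≠ 0 := fun h => hd (by rw [h, zero_mul])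
  have := hq _ h1
  rw [degree_add', degree_single'] at this
  omega

lemma two_eq_zero' : (2 : MvPolynomial (Fin n) (ZMod 2)) = 0 := by
  have : ((2 : ℕ) : MvPolynomial (Fin n) (ZMod 2)) = 0 := CharP.cast_eq_zero _ 2
  exact_mod_cast this

lemma zmod2_pow (c : ZMod 2) (k : ℕ) : c ^ 2 ^ (k + 1) = c := by
  induction k with
  | zero => revert c; decide
  | succ k ih =>
    have : (2 : ℕ) ^ (k + 2) = 2 ^ (k + 1) * 2 := by ring
    have h2 : ∀ c : ZMod 2, c ^ 2 = c := by decide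
    rw [this, pow_mul, ih, h2]

lemma eq_sum_of_homog_one {a : MvPolynomial (Fin n) (ZMod 2)} (ha : a.IsHomogeneous 1) :
    a = ∑ j : Fin n, C (coeff (Finsupp.single j 1) a) * X j := by
  apply MvPolynomial.ext
  intro m
  rw [isHom_def] at ha
  have hR : ∀ j : Fin n, coeff m (C (coeff (Finsupp.single j 1) a) * X j)
      = if Finsupp.single j 1 = m then coeff (Finsupp.single j 1) a else 0 := by
    intro j
    rw [coeff_C_mul, X, coeff_monomial]
    split <;> simp
  rw [coeff_sum]
  simp only [hR]
  by_cases hm : m.degree = 1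
  · obtain ⟨j0, rfl⟩ := exists_single_of_degree_one hm
    rw [Finset.sum_eq_single j0]
    · rw [if_pos rfl]
    · intro b _ hb
      rw [if_neg]
      intro heq
      have := DFunLike.congr_fun heq b
      simp [Finsupp.single_apply, Ne.symm hb] at this
    · simp
  · rw [Finset.sum_eq_zero, eq_comm]
    · by_contra h
      exact hm (ha m (fun hh => h hh.symm))
    · intro j _
      rw [if_neg]
      intro heq
      apply hm
      rw [← heq, degree_single']

lemma milnorQ_X (i : ℕ) (j : Fin n) : milnorQ n i (X j) = X j ^ 2 ^ (i + 1) :=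
  mkDerivation_X _ _ _

lemma milnorQ_C (i : ℕ) (a : ZMod 2) : milnorQ n i (C a) = 0 := by
  have := (milnorQ n i).map_algebraMap a
  rwa [MvPolynomial.algebraMap_eq] at this

lemma milnorQ_linear {a : MvPolynomial (Fin n) (ZMod 2)} (ha : a.IsHomogeneous 1) (i : ℕ) :
    milnorQ n i a = a ^ 2 ^ (i + 1) := by
  haveI : Fact (Nat.Prime 2) := ⟨Nat.prime_two⟩
  conv_lhs => rw [eq_sum_of_homog_one ha]
  conv_rhs => rw [eq_sum_of_homog_one ha]
  rw [sum_pow_char_pow, map_sum]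
  apply Finset.sum_congr rfl
  intro j _
  rw [← smul_eq_C_mul]
  rw [Derivation.map_smul, milnorQ_X, smul_pow, zmod2_pow]

lemma linear_eq_zero {a : MvPolynomial (Fin n) (ZMod 2)} (ha : a.IsHomogeneous 1)
    (hp : ∀ j, pderiv j a = 0) : a = 0 := by
  rw [eq_sum_of_homog_one ha]
  apply Finset.sum_eq_zero
  intro j _
  have := coeff_pderiv j a 0
  rw [hp j, coeff_zero, zero_add] at this
  simp only [Finsupp.coe_zero, Pi.zero_apply, Nat.cast_zero, zero_add, mul_one] at this
  rw [← this]
  simp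

lemma pderiv_milnorQ (i : ℕ) (j : Fin n) (p : MvPolynomial (Fin n) (ZMod 2)) :
    pderiv j (milnorQ n i p) = milnorQ n i (pderiv j p) := by
  induction p using MvPolynomial.induction_on with
  | C a => simp [milnorQ_C]
  | add p r hp hr => simp [map_add, hp, hr]
  | mul_X p k hp =>
    have hXm : pderiv j ((X k : MvPolynomial (Fin n) (ZMod 2)) ^ 2 ^ (i + 1)) = 0 := by
      rw [pderiv_pow]
      have h0 : ((2 ^ (i + 1) : ℕ) : MvPolynomial (Fin n) (ZMod 2)) = 0 := by
        push_cast
        rw [two_eq_zero', zero_pow (Nat.succ_ne_zero i)]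
      rw [h0, zero_mul, zero_mul]
    by_cases hkj : k = j
    · subst hkj
      simp [Derivation.leibniz, smul_eq_mul, milnorQ_X, pderiv_mul, hXm, hp, pderiv_X_self]
      ring
    · simp [Derivation.leibniz, smul_eq_mul, milnorQ_X, pderiv_mul, hXm, hp,
        pderiv_X_of_ne hkj]
      ring

lemma pderiv_pderiv_self (j : Fin n) (p : MvPolynomial (Fin n) (ZMod 2)) :
    pderiv j (pderiv j p) = 0 := by
  induction p using MvPolynomial.induction_on with
  | C a => simp
  | add p r hp hr => simp [hp, hr]
  | mul_X p k hp =>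
    rw [pderiv_mul]
    by_cases hkj : k = j
    · subst hkj
      rw [pderiv_X_self, mul_one, map_add, pderiv_mul, pderiv_X_self, mul_one, hp, zero_mul,
        zero_add]
      have h2 := two_eq_zero' (n := n)
      linear_combination (pderiv k p) * h2
    · rw [pderiv_X_of_ne hkj, mul_zero, add_zero, pderiv_mul, hp, zero_mul, zero_add,
        pderiv_X_of_ne hkj, mul_zero]

lemma pderiv_comm' (j k : Fin n) (p : MvPolynomial (Fin n) (ZMod 2)) :
    pderiv j (pderiv k p) = pderiv k (pderiv j p) := by
  induction p using MvPolynomial.induction_on with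
  | C a => simp
  | add p r hp hr => simp [hp, hr]
  | mul_X p m hp =>
    simp only [pderiv_mul, map_add, pderiv_mul, hp]
    have hcj : pderiv j (pderiv k (X m) : MvPolynomial (Fin n) (ZMod 2)) = 0 := by
      classical
      rw [pderiv_X]
      by_cases h : k = m <;> simp [h, Pi.single_apply]
    have hck : pderiv k (pderiv j (X m) : MvPolynomial (Fin n) (ZMod 2)) = 0 := by
      classical
      rw [pderiv_X]
      by_cases h : j = m <;> simp [h, Pi.single_apply]
    rw [hcj, hck]
    ring

lemma zmod2_sq (c : ZMod 2) : c ^ 2 = c := by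
  have := zmod2_pow c 0
  rw [show (2:ℕ) ^ (0 + 1) = 2 by norm_num] at this
  exact this

lemma single_two_eq_add_iff {j k : Fin n} (hjk : j ≠ k) (b : Fin n) :
    Finsupp.single b 2 ≠ Finsupp.single j 1 + Finsupp.single k 1 := by
  intro h
  have hj : (Finsupp.single b 2 : Fin n →₀ ℕ) j = 1 := by
    rw [h, Finsupp.add_apply, Finsupp.single_apply, Finsupp.single_apply,
      if_pos rfl, if_neg (Ne.symm hjk)]
    rfl
  rw [Finsupp.single_apply] at hj
  by_cases hbj : b = j
  · rw [if_pos hbj] at hj; omega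
  · rw [if_neg hbj] at hj; omega

lemma square_of_pderiv_zero {q : MvPolynomial (Fin n) (ZMod 2)} (hq : q.IsHomogeneous 2)
    (hp : ∀ j, pderiv j q = 0) :
    ∃ l : MvPolynomial (Fin n) (ZMod 2), l.IsHomogeneous 1 ∧ q = l * l := by
  haveI : Fact (Nat.Prime 2) := ⟨Nat.prime_two⟩
  refine ⟨∑ j : Fin n, C (coeff (Finsupp.single j 2) q) * X j, ?_, ?_⟩
  · apply IsHomogeneous.sum
    intro j _
    exact (isHomogeneous_X (ZMod 2) j).C_mul (coeff (Finsupp.single j 2) q)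
  · rw [← sq, sum_pow_char (p := 2)]
    have hterm : ∀ j : Fin n, (C (coeff (Finsupp.single j 2) q) * X j) ^ 2
        = C (coeff (Finsupp.single j 2) q) * X j ^ 2 := by
      intro j
      rw [mul_pow, ← C_pow, zmod2_sq]
    simp only [hterm]
    apply MvPolynomial.ext
    intro m
    rw [coeff_sum]
    have hR : ∀ j : Fin n, coeff m (C (coeff (Finsupp.single j 2) q) * X j ^ 2)
        = if Finsupp.single j 2 = m then coeff (Finsupp.single j 2) q else 0 := by
      intro j
      rw [coeff_C_mul, coeff_X_pow]
      split <;> simp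
    simp only [hR]
    by_cases hm : m.degree = 2
    · obtain ⟨j, k, rfl⟩ := exists_two_single_of_degree_two hm
      by_cases hjk : j = k
      · subst hjk
        have hsingle : Finsupp.single j 1 + Finsupp.single j 1 = Finsupp.single j 2 := by
          rw [← Finsupp.single_add]
        rw [hsingle]
        rw [Finset.sum_eq_single j]
        · rw [if_pos rfl]
        · intro b _ hb
          rw [if_neg]
          intro heq
          have := DFunLike.congr_fun heq b
          simp [Finsupp.single_apply, Ne.symm hb] at this
        · simp
      · rw [Finset.sum_eq_zero]
        · have hc := coeff_pderiv j q (Finsupp.single k 1)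
          rw [hp j, coeff_zero] at hc
          have hkj : (Finsupp.single k 1 : Fin n →₀ ℕ) j = 0 := by
            simp [Finsupp.single_apply, Ne.symm hjk]
          rw [hkj] at hc
          simp only [Nat.cast_zero, zero_add, mul_one] at hc
          rw [add_comm] at hc
          exact hc.symm
        · intro b _
          exact if_neg (single_two_eq_add_iff hjk b)
    · rw [Finset.sum_eq_zero]
      · by_contra h
        exact hm ((isHom_def q 2).mp hq m h)
      · intro j _
        rw [if_neg]
        intro heq
        exact hm (by rw [← heq, degree_single'])

lemma homog_pderiv2 {q : MvPolynomial (Fin n) (ZMod 2)} (hq : q.IsHomogeneous 2) (j : Fin n) :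
    (pderiv j q).IsHomogeneous 1 :=
  homog_pderiv (k := 1) (by rwa [show (1 : ℕ) + 1 = 2 from rfl]) j

theorem kernel_of_alpha_h2 {n : ℕ}
    (q : MvPolynomial (Fin n) (ZMod 2)) (hq : q.IsHomogeneous 2)
    (e : ℕ) (s : Finset ℕ) (f : ℕ → ℕ) :
    q ^ e * (∏ i ∈ s, (milnorQ n i q) ^ f i) *
        (q ^ 2 * milnorQ n 1 q + (milnorQ n 0 q) ^ 3 + q ^ 3 * milnorQ n 0 q) = 0 ↔
      ∃ a b : MvPolynomial (Fin n) (ZMod 2), a.IsHomogeneous 1 ∧ b.IsHomogeneous 1 ∧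
        q = a * b := by
  haveI : Fact (Nat.Prime 2) := ⟨Nat.prime_two⟩
  have h2 : (2 : MvPolynomial (Fin n) (ZMod 2)) = 0 := two_eq_zero'
  constructor
  · intro hLHS
    by_cases hq0 : q = 0
    · exact ⟨0, 0, isHomogeneous_zero _ _ 1, isHomogeneous_zero _ _ 1, by rw [hq0, mul_zero]⟩
    rcases mul_eq_zero.mp hLHS with h1 | hE
    · rcases mul_eq_zero.mp h1 with h1a | h1b
      · exact absurd h1a (pow_ne_zero _ hq0)
      · obtain ⟨i, _, hi⟩ := Finset.prod_eq_zero_iff.mp h1b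
        have hfi : f i ≠ 0 := by
          intro h
          rw [h, pow_zero] at hi
          exact one_ne_zero hi
        have hDq : milnorQ n i q = 0 := by
          have := pow_eq_zero_iff hfi |>.mp hi
          exact this
        have hLz : ∀ j, pderiv j q = 0 := by
          intro j
          have hcom := pderiv_milnorQ i j q
          rw [hDq, map_zero, milnorQ_linear (homog_pderiv2 hq j) i] at hcom
          exact pow_eq_zero_iff (pow_ne_zero _ (two_ne_zero)) |>.mp hcom.symm
        obtain ⟨l, hl, hql⟩ := square_of_pderiv_zero hq hLz
        exact ⟨l, l, hl, hl, hql⟩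
    · set A := milnorQ n 0 q with hAdef
      set B := milnorQ n 1 q with hBdef
      have hstep : ∀ j : Fin n, (pderiv j q) *
          (q ^ 2 * (pderiv j q) ^ 3 + A ^ 2 * (pderiv j q) + q ^ 2 * A + q ^ 3 * (pderiv j q))
            = 0 := by
        intro j
        have hd := congrArg (pderiv j) hE
        rw [map_zero] at hd
        have hpdA : pderiv j A = (pderiv j q) ^ 2 := by
          rw [hAdef, pderiv_milnorQ, milnorQ_linear (homog_pderiv2 hq j) 0,
            show (2 : ℕ) ^ (0 + 1) = 2 from rfl]
        have hpdB : pderiv j B = (pderiv j q) ^ 4 := by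
          rw [hBdef, pderiv_milnorQ, milnorQ_linear (homog_pderiv2 hq j) 1,
            show (2 : ℕ) ^ (1 + 1) = 4 from rfl]
        simp only [map_add, pderiv_mul, pderiv_pow, hpdA, hpdB] at hd
        push_cast at hd
        linear_combination hd - (q * (pderiv j q) * B + A ^ 2 * (pderiv j q) ^ 2
          + q ^ 2 * (pderiv j q) * A) * h2
      by_cases hall0 : ∀ j, pderiv j q = 0
      · obtain ⟨l, hl, hql⟩ := square_of_pderiv_zero hq hall0
        exact ⟨l, l, hl, hl, hql⟩
      push_neg at hall0
      obtain ⟨j0, hu⟩ := hall0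
      set u := pderiv j0 q with hudef
      have hE1 : q ^ 2 * u ^ 3 + A ^ 2 * u + q ^ 2 * A + q ^ 3 * u = 0 := by
        rcases mul_eq_zero.mp (hstep j0) with h | h
        · exact absurd h hu
        · exact h
      by_cases hsame : ∀ k, pderiv k q = 0 ∨ pderiv k q = u
      · exfalso
        apply hu
        apply linear_eq_zero (homog_pderiv2 hq j0)
        intro k
        rcases hsame k with hk | hk
        · rw [← pderiv_comm', hk, map_zero]
        · rw [← pderiv_comm', hk, hudef, pderiv_pderiv_self]
      push_neg at hsame
      obtain ⟨k, hv0, hvu⟩ := hsame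
      set v := pderiv k q with hvdef
      have hE2 : q ^ 2 * v ^ 3 + A ^ 2 * v + q ^ 2 * A + q ^ 3 * v = 0 := by
        rcases mul_eq_zero.mp (hstep k) with h | h
        · exact absurd h hv0
        · exact h
      have huv : u + v ≠ 0 := by
        intro h
        apply hvu
        linear_combination h - u * h2
      have hq2 : (q : MvPolynomial (Fin n) (ZMod 2)) ^ 2 ≠ 0 := pow_ne_zero _ hq0
      have hcomb : (u + v) * (A + u * v * (u + v)) = 0 := by
        have hmul : q ^ 2 * ((u + v) * (A + u * v * (u + v))) = 0 := by
          linear_combination v * hE1 + u * hE2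
            + (q ^ 2 * u ^ 2 * v ^ 2 - A ^ 2 * u * v - q ^ 3 * u * v) * h2
        rcases mul_eq_zero.mp hmul with h | h
        · exact absurd h hq2
        · exact h
      have hAv : A + u * v * (u + v) = 0 := by
        rcases mul_eq_zero.mp hcomb with h | h
        · exact absurd h huv
        · exact h
      have hW : q ^ 3 + q ^ 2 * (u ^ 2 + u * v + v ^ 2) + u ^ 2 * v ^ 2 * (u + v) ^ 2 = 0 := by
        have huW : u * (q ^ 3 + q ^ 2 * (u ^ 2 + u * v + v ^ 2)
            + u ^ 2 * v ^ 2 * (u + v) ^ 2) = 0 := by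
          linear_combination hE1 + (-(u * (A - u * v * (u + v))) - q ^ 2) * hAv
            + (q ^ 2 * u * v * (u + v)) * h2
        rcases mul_eq_zero.mp huW with h | h
        · exact absurd h hu
        · exact h
      have hcubic : (q + u * v) * ((q + u * (u + v)) * (q + v * (u + v))) = 0 := by
        linear_combination hW + (q ^ 2 * u * v + q * u * v * (u + v) ^ 2) * h2
      have hu1 : u.IsHomogeneous 1 := homog_pderiv2 hq j0
      have hv1 : v.IsHomogeneous 1 := homog_pderiv2 hq k
      have huv1 : (u + v).IsHomogeneous 1 := hu1.add hv1
      rcases mul_eq_zero.mp hcubic with h | h'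
      · exact ⟨u, v, hu1, hv1, by linear_combination h - u * v * h2⟩
      rcases mul_eq_zero.mp h' with h | h
      · exact ⟨u, u + v, hu1, huv1, by linear_combination h - u * (u + v) * h2⟩
      · exact ⟨v, u + v, hv1, huv1, by linear_combination h - v * (u + v) * h2⟩
  · rintro ⟨a, b, ha, hb, rfl⟩
    have hA : milnorQ n 0 (a * b) = a * b ^ 2 + b * a ^ 2 := by
      rw [Derivation.leibniz, milnorQ_linear hb 0, milnorQ_linear ha 0, smul_eq_mul, smul_eq_mul,
        show (2 : ℕ) ^ (0 + 1) = 2 from rfl]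
    have hB : milnorQ n 1 (a * b) = a * b ^ 4 + b * a ^ 4 := by
      rw [Derivation.leibniz, milnorQ_linear hb 1, milnorQ_linear ha 1, smul_eq_mul, smul_eq_mul,
        show (2 : ℕ) ^ (1 + 1) = 4 from rfl]
    rw [hA, hB]
    have hzero : (a * b) ^ 2 * (a * b ^ 4 + b * a ^ 4) + (a * b ^ 2 + b * a ^ 2) ^ 3
        + (a * b) ^ 3 * (a * b ^ 2 + b * a ^ 2) = 0 := by
      linear_combination (a ^ 3 * b ^ 6 + a ^ 6 * b ^ 3 + 2 * a ^ 4 * b ^ 5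
        + 2 * a ^ 5 * b ^ 4) * h2
    rw [hzero, mul_zero]
end

section
/- Let q ∈ MvPolynomial (Fin n) (ZMod 2) be a quadratic form and let r ∈ ℕ. Then the rank of the polar matrix of q is at most 2r if and only if there exist linear forms a_i, b_i for i < r and a linear form c such that q = (Σ_{i<r} a_i·b_i) + c². (Classification of quadratic forms over F₂ by the rank of the associated bilinear form: the rank filtration subfunctor S^{2,2r} of the functor V ↦ S²(V♯) is generated by the single quadratic form u₁v₁ + ⋯ + u_r v_r + w².) -/
set_option synthInstance.maxHeartbeats 1000000
set_option maxHeartbeats 1000000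

open MvPolynomial Matrix Finset

lemma z2 (x : ZMod 2) : x = 0 ∨ x = 1 := by revert x; decide
lemma z2self (x : ZMod 2) : x + x = 0 := by revert x; decide
lemma z2sq (x : ZMod 2) : x ^ 2 = x := by revert x; decide

lemma deg2_struct {n : ℕ} {d : Fin n →₀ ℕ} (h : Finsupp.weight 1 d = 2) :
    ∃ x y, d = Finsupp.single x 1 + Finsupp.single y 1 := by
  have hc : Multiset.card (Finsupp.toMultiset d) = 2 := by
    rw [Finsupp.card_toMultiset]
    simp [Finsupp.weight_apply, smul_eq_mul] at h
    exact h
  obtain ⟨x, y, hxy⟩ := Multiset.card_eq_two.mp hc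
  refine ⟨x, y, ?_⟩
  have h2 : Finsupp.toMultiset (Finsupp.single x 1 + Finsupp.single y 1) = {x, y} := by
    rw [Finsupp.toMultiset_add, Finsupp.toMultiset_single, Finsupp.toMultiset_single]
    simp
  have e1 := Finsupp.toMultiset_eq_iff.mp hxy
  have e2 := Finsupp.toMultiset_eq_iff.mp h2
  rw [e1, e2]

lemma deg1_struct {n : ℕ} {d : Fin n →₀ ℕ} (h : Finsupp.weight 1 d = 1) :
    ∃ x, d = Finsupp.single x 1 := by
  have hc : Multiset.card (Finsupp.toMultiset d) = 1 := by
    rw [Finsupp.card_toMultiset]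
    simp [Finsupp.weight_apply, smul_eq_mul] at h
    exact h
  obtain ⟨x, hx⟩ := Multiset.card_eq_one.mp hc
  refine ⟨x, ?_⟩
  have h2 : Finsupp.toMultiset (Finsupp.single x 1) = {x} := by
    rw [Finsupp.toMultiset_single]; simp
  have e1 := Finsupp.toMultiset_eq_iff.mp hx
  have e2 := Finsupp.toMultiset_eq_iff.mp h2
  rw [e1, e2]

lemma single_pair_eq {n : ℕ} {j k l m : Fin n} (hjk : j ≠ k) :
    Finsupp.single l 1 + Finsupp.single m 1 = Finsupp.single j 1 + Finsupp.single k 1 ↔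
      (l = j ∧ m = k) ∨ (l = k ∧ m = j) := by
  have tm : ∀ (a b : Fin n), Finsupp.toMultiset (Finsupp.single a 1 + Finsupp.single b 1)
      = {a, b} := by
    intro a b
    rw [Finsupp.toMultiset_add, Finsupp.toMultiset_single, Finsupp.toMultiset_single]
    simp
  constructor
  · intro h
    have hmul : ({l, m} : Multiset (Fin n)) = {j, k} := by
      rw [← tm, ← tm, h]
    rw [Multiset.insert_eq_cons, Multiset.insert_eq_cons, Multiset.cons_eq_cons] at hmul
    rcases hmul with ⟨rfl, hs⟩ | ⟨hne, cs, hcs1, hcs2⟩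
    · exact Or.inl ⟨rfl, Multiset.singleton_inj.mp hs⟩
    · rw [Multiset.singleton_eq_cons_iff] at hcs1 hcs2
      exact Or.inr ⟨hcs2.1.symm, hcs1.1⟩
  · rintro (⟨rfl, rfl⟩ | ⟨rfl, rfl⟩)
    · rfl
    · exact add_comm _ _

noncomputable def linForm {n : ℕ} (u : Fin n → ZMod 2) : MvPolynomial (Fin n) (ZMod 2) :=
  ∑ l, C (u l) * X l

lemma linForm_hom {n : ℕ} (u : Fin n → ZMod 2) : (linForm u).IsHomogeneous 1 :=
  IsHomogeneous.sum _ _ _ fun l _ => isHomogeneous_C_mul_X _ _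

lemma coeff_linForm_mul {n : ℕ} (u v : Fin n → ZMod 2) {j k : Fin n} (hjk : j ≠ k) :
    (linForm u * linForm v).coeff (Finsupp.single j 1 + Finsupp.single k 1) =
      u j * v k + u k * v j := by
  rw [linForm, linForm, Finset.sum_mul_sum]
  rw [MvPolynomial.coeff_sum]
  have key : ∀ l, ((∑ m, (C (u l) * X l) * (C (v m) * X m)).coeff
      (Finsupp.single j 1 + Finsupp.single k 1)) =
      ∑ m, (if (l = j ∧ m = k) ∨ (l = k ∧ m = j) then u l * v m else 0) := by
    intro l
    rw [MvPolynomial.coeff_sum]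
    refine Finset.sum_congr rfl fun m _ => ?_
    have he : (C (u l) * X l) * (C (v m) * X m) =
        monomial (Finsupp.single l 1 + Finsupp.single m 1) (u l * v m) := by
      rw [C_mul_X_eq_monomial, C_mul_X_eq_monomial, monomial_mul]
    rw [he, coeff_monomial]
    simp only [single_pair_eq hjk]
  rw [Finset.sum_congr rfl fun l _ => key l]
  have split : ∀ (l m : Fin n), (if (l = j ∧ m = k) ∨ (l = k ∧ m = j) then u l * v m else 0) =
      (if l = j ∧ m = k then u l * v m else 0) + (if l = k ∧ m = j then u l * v m else 0) := by
    intro l m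
    by_cases h1 : l = j ∧ m = k
    · obtain ⟨rfl, rfl⟩ := h1
      simp [hjk, Ne.symm hjk]
    · by_cases h2 : l = k ∧ m = j
      · obtain ⟨rfl, rfl⟩ := h2
        simp [hjk, Ne.symm hjk]
      · simp [h1, h2]
  simp_rw [split, Finset.sum_add_distrib, ite_and]
  simp

/-- The polar matrix of a quadratic form over `F₂`: off-diagonal entry `(j,k)` is the
coefficient of `x_j x_k`, and the diagonal is zero. -/
noncomputable def polarMatrix {n : ℕ} (q : MvPolynomial (Fin n) (ZMod 2)) :
    Matrix (Fin n) (Fin n) (ZMod 2) :=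
  Matrix.of fun j k =>
    if j = k then 0 else q.coeff (Finsupp.single j 1 + Finsupp.single k 1)

lemma polar_zero {n : ℕ} : polarMatrix (0 : MvPolynomial (Fin n) (ZMod 2)) = 0 := by
  ext j k; simp [polarMatrix]

lemma polar_add {n : ℕ} (p q : MvPolynomial (Fin n) (ZMod 2)) :
    polarMatrix (p + q) = polarMatrix p + polarMatrix q := by
  ext j k
  by_cases h : j = k <;> simp [polarMatrix, h, coeff_add]

lemma polar_sum {n : ℕ} {ι : Type*} (s : Finset ι) (f : ι → MvPolynomial (Fin n) (ZMod 2)) :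
    polarMatrix (∑ i ∈ s, f i) = ∑ i ∈ s, polarMatrix (f i) := by
  induction s using Finset.cons_induction with
  | empty => simp [polar_zero]
  | cons i s hi ih => rw [Finset.sum_cons, polar_add, ih, Finset.sum_cons]

lemma polar_linForm_mul {n : ℕ} (u v : Fin n → ZMod 2) :
    polarMatrix (linForm u * linForm v) = vecMulVec u v + vecMulVec v u := by
  ext j k
  by_cases h : j = k
  · subst h
    simp [polarMatrix, vecMulVec, mul_comm, z2self]
  · simp only [polarMatrix, Matrix.of_apply, if_neg h, coeff_linForm_mul u v h,
      Matrix.add_apply, vecMulVec_apply]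
    ring

lemma polar_linForm_sq {n : ℕ} (u : Fin n → ZMod 2) :
    polarMatrix (linForm u ^ 2) = 0 := by
  rw [sq, polar_linForm_mul]
  ext j k
  simp [vecMulVec, mul_comm, z2self]

lemma coeff_linForm {n : ℕ} (u : Fin n → ZMod 2) (d : Fin n →₀ ℕ) :
    (linForm u).coeff d = ∑ l, if Finsupp.single l 1 = d then u l else 0 := by
  rw [linForm, MvPolynomial.coeff_sum]
  refine Finset.sum_congr rfl fun l _ => ?_
  rw [C_mul_X_eq_monomial, coeff_monomial]

lemma homog1_eq_linForm {n : ℕ} {c : MvPolynomial (Fin n) (ZMod 2)}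
    (hc : c.IsHomogeneous 1) : ∃ u, c = linForm u := by
  refine ⟨fun l => c.coeff (Finsupp.single l 1), MvPolynomial.ext _ _ fun d => ?_⟩
  rw [coeff_linForm]
  by_cases hd : ∃ x, d = Finsupp.single x 1
  · obtain ⟨x, rfl⟩ := hd
    rw [Finset.sum_eq_single x]
    · simp
    · intro l _ hl
      rw [if_neg]
      intro h
      exact hl ((Finsupp.single_left_inj one_ne_zero).mp h)
    · simp
  · have h0 : c.coeff d = 0 := by
      by_contra h
      exact hd (deg1_struct (hc h))
    rw [h0]
    symm
    apply Finset.sum_eq_zero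
    intro l _
    rw [if_neg]
    intro h
    exact hd ⟨l, h.symm⟩

lemma linForm_sq_eq {n : ℕ} (d : Fin n → ZMod 2) :
    linForm d ^ 2 = ∑ l, monomial (Finsupp.single l 2) (d l) := by
  rw [linForm, sum_pow_char]
  refine Finset.sum_congr rfl fun l _ => ?_
  rw [mul_pow, ← C_pow, z2sq, X_pow_eq_monomial, C_mul_monomial, mul_one]

lemma coeff_linForm_sq {n : ℕ} (d : Fin n → ZMod 2) (m : Fin n →₀ ℕ) :
    (linForm d ^ 2).coeff m = ∑ l, if Finsupp.single l 2 = m then d l else 0 := by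
  rw [linForm_sq_eq, MvPolynomial.coeff_sum]
  exact Finset.sum_congr rfl fun l _ => coeff_monomial _ _ _

lemma diag_quadratic {n : ℕ} {p : MvPolynomial (Fin n) (ZMod 2)}
    (hp : p.IsHomogeneous 2) (hpolar : polarMatrix p = 0) :
    ∃ d : Fin n → ZMod 2, p = linForm d ^ 2 := by
  refine ⟨fun l => p.coeff (Finsupp.single l 2), MvPolynomial.ext _ _ fun m => ?_⟩
  rw [coeff_linForm_sq]
  by_cases hm : ∃ x, m = Finsupp.single x 2
  · obtain ⟨x, rfl⟩ := hm
    rw [Finset.sum_eq_single x]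
    · simp
    · intro l _ hl
      rw [if_neg]
      intro h
      exact hl ((Finsupp.single_left_inj two_ne_zero).mp h)
    · simp
  · have h0 : p.coeff m = 0 := by
      by_contra h
      obtain ⟨a, b, rfl⟩ := deg2_struct (hp h)
      rcases eq_or_ne a b with rfl | hab
      · exact hm ⟨a, by rw [← Finsupp.single_add]⟩
      · have := congrFun (congrFun hpolar a) b
        simp only [polarMatrix, Matrix.of_apply, if_neg hab, Matrix.zero_apply] at this
        exact h this
    rw [h0]
    symm
    apply Finset.sum_eq_zero
    intro l _
    rw [if_neg]
    intro h
    exact hm ⟨l, h.symm⟩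

lemma my_rank_add_le {n : ℕ} (A B : Matrix (Fin n) (Fin n) (ZMod 2)) :
    (A + B).rank ≤ A.rank + B.rank := by
  simp only [Matrix.rank]
  have hle : LinearMap.range (A + B).mulVecLin ≤
      LinearMap.range A.mulVecLin ⊔ LinearMap.range B.mulVecLin := by
    rintro y ⟨x, rfl⟩
    rw [Matrix.mulVecLin_add]
    exact Submodule.add_mem_sup (LinearMap.mem_range_self _ x) (LinearMap.mem_range_self _ x)
  calc Module.finrank (ZMod 2) (LinearMap.range (A + B).mulVecLin)
      ≤ Module.finrank (ZMod 2)
        ↥(LinearMap.range A.mulVecLin ⊔ LinearMap.range B.mulVecLin) :=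
        Submodule.finrank_mono hle
    _ ≤ _ := by
        have := Submodule.finrank_sup_add_finrank_inf_eq
          (LinearMap.range A.mulVecLin) (LinearMap.range B.mulVecLin)
        omega

lemma my_rank_vecMulVec_le {n : ℕ} (u v : Fin n → ZMod 2) :
    (vecMulVec u v).rank ≤ 1 := by
  rw [vecMulVec_eq Unit]
  refine (Matrix.rank_mul_le_left _ _).trans ?_
  exact (Matrix.rank_le_card_width (replicateCol Unit u)).trans (le_of_eq Fintype.card_unit)

lemma z2self' (x : ZMod 2) : x + x = 0 := by revert x; decide

lemma vecMulVec_mulVec' {n : ℕ} (a b x : Fin n → ZMod 2) :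
    vecMulVec a b *ᵥ x = (b ⬝ᵥ x) • a := by
  ext i
  simp only [mulVec, dotProduct, vecMulVec_apply, Pi.smul_apply, smul_eq_mul]
  rw [Finset.sum_mul]
  exact Finset.sum_congr rfl fun m _ => by ring

lemma rank_zero_eq_zero {n : ℕ} {P : Matrix (Fin n) (Fin n) (ZMod 2)}
    (h : P.rank = 0) : P = 0 := by
  have hr : LinearMap.range P.mulVecLin = ⊥ := Submodule.finrank_eq_zero.mp h
  ext j k
  have : P.mulVecLin (Pi.single k 1) = 0 := by
    have := LinearMap.mem_range_self P.mulVecLin (Pi.single k 1)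
    rw [hr] at this
    simpa using this
  have h2 := congrFun ((Matrix.mulVecLin_apply _ _).symm.trans this) j
  rw [Matrix.mulVec_single] at h2
  simpa using h2

lemma alt_decomp {n : ℕ} (r : ℕ) (P : Matrix (Fin n) (Fin n) (ZMod 2))
    (hsym : ∀ a b, P a b = P b a) (hdiag : ∀ i, P i i = 0) (hrank : P.rank ≤ 2 * r) :
    ∃ u v : Fin r → (Fin n → ZMod 2),
      P = ∑ i, (vecMulVec (u i) (v i) + vecMulVec (v i) (u i)) := by
  induction r generalizing P with
  | zero =>
    refine ⟨0, 0, ?_⟩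
    have h0 : P = 0 := rank_zero_eq_zero (Nat.le_zero.mp (by simpa using hrank))
    simp [h0]
  | succ r ih =>
    by_cases hP : P = 0
    · exact ⟨0, 0, by ext x y; simp [hP, Matrix.sum_apply, vecMulVec_apply]⟩
    obtain ⟨j, k, hjk⟩ : ∃ j k, P j k ≠ 0 := by
      by_contra h
      push_neg at h
      exact hP (by ext j k; simpa using h j k)
    have hjk1 : P j k = 1 := by
      rcases (by revert hjk; generalize P j k = x; revert x; decide :
        P j k = 0 ∨ P j k = 1) with h | h
      · exact absurd h hjk
      · exact h
    have hne : j ≠ k := fun h => hjk (by rw [h]; exact hdiag k)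
    set a : Fin n → ZMod 2 := fun l => P l j with ha
    set b : Fin n → ZMod 2 := fun l => P l k with hb
    set Q := P + vecMulVec a b + vecMulVec b a with hQ
    have haj : a j = 0 := hdiag j
    have hak : a k = 1 := by rw [ha]; exact (hsym k j).trans ((hsym j k).symm ▸ hjk1)
    have hbj : b j = 1 := hjk1
    have hbk : b k = 0 := hdiag k
    have hQsym : ∀ x y, Q x y = Q y x := by
      intro x y
      simp only [hQ, Matrix.add_apply, vecMulVec_apply]
      rw [hsym x y]
      ring
    have hQdiag : ∀ i, Q i i = 0 := by
      intro i
      simp only [hQ, Matrix.add_apply, vecMulVec_apply, hdiag i]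
      rw [mul_comm (b i) (a i), add_assoc, z2self' (a i * b i)]
      simp
    have hrowj : ∀ l, Q j l = 0 := by
      intro l
      have he : Q j l = P j l + a j * b l + b j * a l := rfl
      rw [he, haj, hbj, zero_mul, add_zero, one_mul]
      show P j l + P l j = 0
      rw [hsym l j]
      exact z2self' _
    have hrowk : ∀ l, Q k l = 0 := by
      intro l
      have he : Q k l = P k l + a k * b l + b k * a l := rfl
      rw [he, hak, hbk, zero_mul, add_zero, one_mul]
      show P k l + P l k = 0
      rw [hsym l k]
      exact z2self' _
    have hQrank : Q.rank ≤ 2 * r := by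
      set W := LinearMap.range P.mulVecLin with hW
      set φ : (Fin n → ZMod 2) →ₗ[ZMod 2] (ZMod 2) × (ZMod 2) :=
        LinearMap.prod (LinearMap.proj j) (LinearMap.proj k) with hφ
      set ψ := φ.comp W.subtype with hψ
      set U := LinearMap.range Q.mulVecLin with hU
      have hmem_a : a ∈ W := ⟨Pi.single j 1, by
        rw [Matrix.mulVecLin_apply, Matrix.mulVec_single]
        ext i; simp [ha]⟩
      have hmem_b : b ∈ W := ⟨Pi.single k 1, by
        rw [Matrix.mulVecLin_apply, Matrix.mulVec_single]
        ext i; simp [hb]⟩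
      have hUW : U ≤ W := by
        rintro y ⟨x, rfl⟩
        rw [Matrix.mulVecLin_apply]
        have he : Q *ᵥ x = P *ᵥ x + (b ⬝ᵥ x) • a + (a ⬝ᵥ x) • b := by
          rw [hQ, Matrix.add_mulVec, Matrix.add_mulVec, vecMulVec_mulVec', vecMulVec_mulVec']
        rw [he]
        exact W.add_mem (W.add_mem (LinearMap.mem_range_self _ x) (W.smul_mem _ hmem_a))
          (W.smul_mem _ hmem_b)
      have hUker : ∀ y ∈ U, φ y = 0 := by
        rintro y ⟨x, rfl⟩
        rw [Matrix.mulVecLin_apply]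
        have hj0 : (Q *ᵥ x) j = 0 := by simp [mulVec, dotProduct, hrowj]
        have hk0 : (Q *ᵥ x) k = 0 := by simp [mulVec, dotProduct, hrowk]
        show ((Q *ᵥ x) j, (Q *ᵥ x) k) = 0
        rw [hj0, hk0]
        rfl
      have hψtop : LinearMap.range ψ = ⊤ := by
        rw [eq_top_iff]
        rintro ⟨x, y⟩ -
        have h10 : ((1 : ZMod 2), (0 : ZMod 2)) ∈ LinearMap.range ψ := ⟨⟨b, hmem_b⟩, by
          show (b j, b k) = (1, 0)
          rw [hbj, hbk]⟩
        have h01 : ((0 : ZMod 2), (1 : ZMod 2)) ∈ LinearMap.range ψ := ⟨⟨a, hmem_a⟩, by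
          show (a j, a k) = (0, 1)
          rw [haj, hak]⟩
        have he : (x, y) = x • ((1 : ZMod 2), (0 : ZMod 2)) + y • ((0 : ZMod 2), (1 : ZMod 2)) := by
          simp [Prod.ext_iff]
        rw [he]
        exact Submodule.add_mem _ (Submodule.smul_mem _ _ h10) (Submodule.smul_mem _ _ h01)
      have hrange2 : Module.finrank (ZMod 2) (LinearMap.range ψ) = 2 := by
        rw [hψtop, finrank_top, Module.finrank_prod, Module.finrank_self]
      have hker : Module.finrank (ZMod 2) U ≤ Module.finrank (ZMod 2) (LinearMap.ker ψ) := by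
        have hle : U.comap W.subtype ≤ LinearMap.ker ψ := by
          intro w hw
          rw [LinearMap.mem_ker]
          exact hUker _ (Submodule.mem_comap.mp hw)
        have heq : Module.finrank (ZMod 2) (U.comap W.subtype) = Module.finrank (ZMod 2) U :=
          (Submodule.comapSubtypeEquivOfLe hUW).finrank_eq
        rw [← heq]
        exact Submodule.finrank_mono hle
      have hsum := LinearMap.finrank_range_add_finrank_ker ψ
      have hQr : Q.rank = Module.finrank (ZMod 2) U := rfl
      have hPr : P.rank = Module.finrank (ZMod 2) W := rfl
      omega
    obtain ⟨u, v, huv⟩ := ih Q hQsym hQdiag hQrank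
    refine ⟨Fin.snoc u a, Fin.snoc v b, ?_⟩
    rw [Fin.sum_univ_castSucc]
    simp only [Fin.snoc_castSucc, Fin.snoc_last]
    rw [← huv]
    have cancel : vecMulVec a b + vecMulVec b a + (vecMulVec a b + vecMulVec b a) = 0 := by
      ext x y
      exact z2self' _
    rw [hQ, add_assoc P (vecMulVec a b) (vecMulVec b a), add_assoc, cancel, add_zero]


theorem rank_filtration_of_quadratic_forms {n : ℕ}
    (q : MvPolynomial (Fin n) (ZMod 2)) (hq : q.IsHomogeneous 2) (r : ℕ) :
    (polarMatrix q).rank ≤ 2 * r ↔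
      ∃ (a b : Fin r → MvPolynomial (Fin n) (ZMod 2))
        (c : MvPolynomial (Fin n) (ZMod 2)),
        (∀ i, (a i).IsHomogeneous 1) ∧ (∀ i, (b i).IsHomogeneous 1) ∧
          c.IsHomogeneous 1 ∧ q = (∑ i, a i * b i) + c ^ 2 := by
  have hsym : ∀ a b, polarMatrix q a b = polarMatrix q b a := by
    intro a b
    by_cases h : a = b
    · rw [h]
    · simp only [polarMatrix, Matrix.of_apply, if_neg h, if_neg (Ne.symm h)]
      rw [add_comm]
  have hdiag : ∀ i, polarMatrix q i i = 0 := fun i => by simp [polarMatrix]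
  constructor
  · intro hrank
    obtain ⟨u, v, huv⟩ := alt_decomp r (polarMatrix q) hsym hdiag hrank
    set S := ∑ i, linForm (u i) * linForm (v i) with hS
    have hpolS : polarMatrix S = polarMatrix q := by
      rw [hS, polar_sum, huv]
      exact Finset.sum_congr rfl fun i _ => polar_linForm_mul _ _
    have hq' : (q + S).IsHomogeneous 2 :=
      hq.add (IsHomogeneous.sum _ _ _ fun i _ => by
        simpa using (linForm_hom (u i)).mul (linForm_hom (v i)))
    have hpol0 : polarMatrix (q + S) = 0 := by
      rw [polar_add, hpolS]
      ext x y
      simp only [Matrix.add_apply, Matrix.zero_apply]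
      exact z2self _
    obtain ⟨d, hd⟩ := diag_quadratic hq' hpol0
    refine ⟨fun i => linForm (u i), fun i => linForm (v i), linForm d,
      fun i => linForm_hom _, fun i => linForm_hom _, linForm_hom _, ?_⟩
    have hSS : S + S = 0 := by
      have : S + S = (2 : ZMod 2) • S := (two_smul _ S).symm
      rw [this, show (2 : ZMod 2) = 0 from rfl, zero_smul]
    calc q = q + (S + S) := by rw [hSS, add_zero]
    _ = (q + S) + S := by ring
    _ = linForm d ^ 2 + S := by rw [hd]
    _ = S + linForm d ^ 2 := add_comm _ _
  · rintro ⟨a, b, c, ha, hb, hc, hq_eq⟩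
    choose u hu using fun i => homog1_eq_linForm (ha i)
    choose v hv using fun i => homog1_eq_linForm (hb i)
    obtain ⟨w, hw⟩ := homog1_eq_linForm hc
    have hpol : polarMatrix q = ∑ i, (vecMulVec (u i) (v i) + vecMulVec (v i) (u i)) := by
      rw [hq_eq, polar_add, polar_sum, hw, polar_linForm_sq, add_zero]
      exact Finset.sum_congr rfl fun i _ => by rw [hu i, hv i, polar_linForm_mul]
    rw [hpol]
    have key : ∀ (s : Finset (Fin r)),
        (∑ i ∈ s, (vecMulVec (u i) (v i) + vecMulVec (v i) (u i))).rank ≤ 2 * s.card := by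
      intro s
      induction s using Finset.cons_induction with
      | empty => simp
      | cons i s hi ih =>
        rw [Finset.sum_cons, Finset.card_cons]
        refine (my_rank_add_le _ _).trans ?_
        have h1 : (vecMulVec (u i) (v i) + vecMulVec (v i) (u i)).rank ≤ 2 :=
          (my_rank_add_le _ _).trans (by
            have t1 := my_rank_vecMulVec_le (u i) (v i)
            have t2 := my_rank_vecMulVec_le (v i) (u i)
            omega)
        omega
    simpa using key Finset.univ
end
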